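/- Fix a real number ε with 0 < ε < 1/8, set α_n = ⌊n^{1/2+ε}⌋ and β_n = ⌊n^{1/4+2ε}⌋. Let f : [n] → [n] be a fixed mapping with at most α_n cyclic points and height at most α_n, and let C ⊆ [n] be its set of cyclic points. Choose, for each x ∈ C, a value b(x) ∈ [n] uniformly at random and independently, and define F : C → C by F(x) = f^{α_n}(b(x)) (this indeed lands in C since the height of f is at most α_n). Then for n large enough, the probability that F has more than β_n cyclic points or height greater than β_n is at most exp(−n^{ε/4}). -/

import Mathlib

open Classical

/-- The two-letter alphabet `{a, b}`. -/
inductive Letter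
  | a
  | b
deriving DecidableEq

instance : Fintype Letter :=
  ⟨{Letter.a, Letter.b}, fun x => by cases x <;> simp⟩

/-- The action of a word on the states of a deterministic complete automaton:
`act δ w q` is the state reached from `q` after reading the word `w`
(first letter applied first, so that `δ_{wc} = δ_c ∘ δ_w`). -/
def act {n : ℕ} {A : Type*} (δ : Fin n → A → Fin n) : List A → Fin n → Fin n
  | [], q => q
  | c :: w, q => act δ w (δ q c)

/-- A point `x` is cyclic for `f` if some positive iterate of `f` sends `x` to itself. -/
def IsCyclicPt {n : ℕ} (f : Fin n → Fin n) (x : Fin n) : Prop :=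
  ∃ i > 0, f^[i] x = x

/-- The set of cyclic points of a mapping `f` on `[n]`. -/
noncomputable def cyclicPts {n : ℕ} (f : Fin n → Fin n) : Finset (Fin n) :=
  Finset.univ.filter (IsCyclicPt f)

/-- The height of a point `x`: the least `i ≥ 0` such that `f^[i] x` is cyclic. -/
noncomputable def heightOf {n : ℕ} (f : Fin n → Fin n) (x : Fin n) : ℕ :=
  sInf {i : ℕ | IsCyclicPt f (f^[i] x)}

/-- The height of a mapping: the maximal height of a point. -/
noncomputable def height {n : ℕ} (f : Fin n → Fin n) : ℕ :=
  Finset.univ.sup (heightOf f)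

/-- `α_n = ⌊n^(1/2+ε)⌋`. -/
noncomputable def alphaN (ε : ℝ) (n : ℕ) : ℕ := ⌊(n : ℝ) ^ ((1 : ℝ)/2 + ε)⌋₊

/-- `β_n = ⌊n^(1/4+2ε)⌋`. -/
noncomputable def betaN (ε : ℝ) (n : ℕ) : ℕ := ⌊(n : ℝ) ^ ((1 : ℝ)/4 + 2*ε)⌋₊

/-- `γ_n = ⌊n^(1/8+4ε)⌋`. -/
noncomputable def gammaN (ε : ℝ) (n : ℕ) : ℕ := ⌊(n : ℝ) ^ ((1 : ℝ)/8 + 4*ε)⌋₊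

/-- The word `u_n = a^{α_n}`. -/
noncomputable def uWord (ε : ℝ) (n : ℕ) : List Letter :=
  List.replicate (alphaN ε n) Letter.a

/-- The word `v_n = u_n (b u_n)^{β_n}`. -/
noncomputable def vWord (ε : ℝ) (n : ℕ) : List Letter :=
  uWord ε n ++ (List.replicate (betaN ε n) (Letter.b :: uWord ε n)).flatten

/-- The word `w_n = v_n (bb v_n)^{γ_n}`. -/
noncomputable def wWord (ε : ℝ) (n : ℕ) : List Letter :=
  vWord ε n ++ (List.replicate (gammaN ε n) (Letter.b :: Letter.b :: vWord ε n)).flatten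

open Finset

variable {ι : Type*} [DecidableEq ι]

noncomputable def esym (q : ι → ℝ) (T : Finset ι) (t : ℕ) : ℝ :=
  ∑ S ∈ T.powersetCard t, ∏ c ∈ S, q c

lemma esym_zero (q : ι → ℝ) (T : Finset ι) : esym q T 0 = 1 := by
  simp [esym]

lemma esym_nonneg {q : ι → ℝ} (hq : ∀ c, 0 ≤ q c) (T : Finset ι) (t : ℕ) :
    0 ≤ esym q T t :=
  Finset.sum_nonneg fun S _ => Finset.prod_nonneg fun c _ => hq c

lemma esym_split (q : ι → ℝ) {T : Finset ι} {d : ι} (hd : d ∈ T) (k : ℕ) :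
    esym q T (k+1) = esym q (T.erase d) (k+1) + q d * esym q (T.erase d) k := by
  unfold esym
  conv_lhs => rw [← Finset.insert_erase hd]
  rw [Finset.powersetCard_succ_insert (Finset.notMem_erase d T)]
  rw [Finset.sum_union]
  · congr 1
    rw [Finset.sum_image]
    · rw [Finset.mul_sum]
      refine Finset.sum_congr rfl fun S hS => ?_
      rw [Finset.prod_insert]
      intro hdS
      exact Finset.notMem_erase d T ((Finset.mem_powersetCard.1 hS).1 hdS)
    · intro S hS S' hS' h
      have hdS : d ∉ S := fun hx => Finset.notMem_erase d T ((Finset.mem_powersetCard.1 hS).1 hx)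
      have hdS' : d ∉ S' := fun hx => Finset.notMem_erase d T ((Finset.mem_powersetCard.1 hS').1 hx)
      have := congrArg (fun A => Finset.erase A d) h
      simpa [Finset.erase_insert hdS, Finset.erase_insert hdS'] using this
  · rw [Finset.disjoint_right]
    rintro S hSimg hSpc
    obtain ⟨S', hS', rfl⟩ := Finset.mem_image.1 hSimg
    exact Finset.notMem_erase d T ((Finset.mem_powersetCard.1 hSpc).1 (Finset.mem_insert_self d _))

lemma esym_succ_identity (q : ι → ℝ) (T : Finset ι) (t : ℕ) :
    ((t:ℝ)+1) * esym q T (t+1) = ∑ c ∈ T, q c * esym q (T.erase c) t := by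
  have lhs : ((t:ℝ)+1) * esym q T (t+1)
      = ∑ S ∈ T.powersetCard (t+1), ∑ c ∈ S, ∏ x ∈ S, q x := by
    rw [esym, Finset.mul_sum]
    refine Finset.sum_congr rfl fun S hS => ?_
    rw [Finset.sum_const, (Finset.mem_powersetCard.1 hS).2, nsmul_eq_mul]
    push_cast
    ring
  have rhs : ∑ c ∈ T, q c * esym q (T.erase c) t
      = ∑ c ∈ T, ∑ S' ∈ (T.erase c).powersetCard t, ∏ x ∈ insert c S', q x := by
    refine Finset.sum_congr rfl fun c hc => ?_
    rw [esym, Finset.mul_sum]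
    refine Finset.sum_congr rfl fun S' hS' => ?_
    rw [Finset.prod_insert]
    exact fun hcS' => Finset.notMem_erase c T ((Finset.mem_powersetCard.1 hS').1 hcS')
  have e1 := Finset.sum_sigma (T.powersetCard (t+1)) (fun S => S)
    (fun p => ∏ x ∈ p.1, q x)
  have e2 := Finset.sum_sigma T (fun c => (T.erase c).powersetCard t)
    (fun p => ∏ x ∈ insert p.1 p.2, q x)
  rw [lhs, rhs, ← e1, ← e2]
  refine Finset.sum_bij' (fun p _ => (⟨p.2, p.1.erase p.2⟩ : Σ _ : ι, Finset ι))
    (fun p _ => (⟨insert p.1 p.2, p.1⟩ : Σ _ : Finset ι, ι)) ?_ ?_ ?_ ?_ ?_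
  · rintro ⟨S, c⟩ hp
    simp only [Finset.mem_sigma] at hp ⊢
    obtain ⟨hS, hc⟩ := hp
    obtain ⟨hsub, hcard⟩ := Finset.mem_powersetCard.1 hS
    refine ⟨hsub hc, Finset.mem_powersetCard.2 ⟨?_, ?_⟩⟩
    · intro x hx
      exact Finset.mem_erase.2 ⟨(Finset.mem_erase.1 hx).1, hsub (Finset.mem_erase.1 hx).2⟩
    · rw [Finset.card_erase_of_mem hc, hcard]
      omega
  · rintro ⟨c, S'⟩ hp
    simp only [Finset.mem_sigma] at hp ⊢
    obtain ⟨hc, hS'⟩ := hp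
    obtain ⟨hsub, hcard⟩ := Finset.mem_powersetCard.1 hS'
    have hcS' : c ∉ S' := fun h => Finset.notMem_erase c T (hsub h)
    refine ⟨Finset.mem_powersetCard.2 ⟨?_, ?_⟩, Finset.mem_insert_self _ _⟩
    · intro x hx
      rcases Finset.mem_insert.1 hx with rfl | hx
      · exact hc
      · exact Finset.mem_of_mem_erase (hsub hx)
    · rw [Finset.card_insert_of_notMem hcS', hcard]
  · rintro ⟨S, c⟩ hp
    simp only [Finset.mem_sigma] at hp
    simp [Finset.insert_erase hp.2]
  · rintro ⟨c, S'⟩ hp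
    simp only [Finset.mem_sigma] at hp
    have hcS' : c ∉ S' := fun h =>
      Finset.notMem_erase c T ((Finset.mem_powersetCard.1 hp.2).1 h)
    simp [Finset.erase_insert hcS']
  · rintro ⟨S, c⟩ hp
    simp only [Finset.mem_sigma] at hp
    simp [Finset.insert_erase hp.2]

lemma esym_erase_antivary {q : ι → ℝ} (hq : ∀ c, 0 ≤ q c) (T : Finset ι) (t : ℕ) :
    AntivaryOn (fun c => esym q (T.erase c) t) q ↑T := by
  intro c hc d hd hqcd
  simp only [Finset.mem_coe] at hc hd
  rcases eq_or_ne c d with rfl | hne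
  · exact le_refl _
  cases t with
  | zero => simp [esym_zero]
  | succ k =>
    simp only []
    show esym q (T.erase d) (k+1) ≤ esym q (T.erase c) (k+1)
    have hdc : d ∈ T.erase c := Finset.mem_erase.2 ⟨hne.symm, hd⟩
    have hcd : c ∈ T.erase d := Finset.mem_erase.2 ⟨hne, hc⟩
    rw [esym_split q hdc k, esym_split q hcd k, Finset.erase_right_comm]
    have hn := esym_nonneg hq ((T.erase c).erase d) k
    nlinarith [le_of_lt hqcd]

lemma esym_erase_sum (q : ι → ℝ) (T : Finset ι) (t : ℕ) :
    ∑ c ∈ T, esym q (T.erase c) t = ((#T : ℝ) - t) * esym q T t := by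
  by_cases ht : t ≤ #T
  · have e1 := Finset.sum_sigma T (fun c => (T.erase c).powersetCard t)
      (fun p => ∏ x ∈ p.2, q x)
    have e2 := Finset.sum_sigma (T.powersetCard t) (fun S => T \ S)
      (fun p => ∏ x ∈ p.1, q x)
    have key : ∑ c ∈ T, esym q (T.erase c) t
        = ∑ S ∈ T.powersetCard t, ∑ _c ∈ T \ S, ∏ x ∈ S, q x := by
      rw [show ∑ c ∈ T, esym q (T.erase c) t
          = ∑ c ∈ T, ∑ S ∈ (T.erase c).powersetCard t, ∏ x ∈ S, q x from rfl,
        ← e1, ← e2]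
      refine Finset.sum_bij' (fun p _ => (⟨p.2, p.1⟩ : Σ _ : Finset ι, ι))
        (fun p _ => (⟨p.2, p.1⟩ : Σ _ : ι, Finset ι)) ?_ ?_ ?_ ?_ ?_
      · rintro ⟨c, S⟩ hp
        simp only [Finset.mem_sigma] at hp ⊢
        obtain ⟨hc, hS⟩ := hp
        obtain ⟨hsub, hcard⟩ := Finset.mem_powersetCard.1 hS
        refine ⟨Finset.mem_powersetCard.2 ⟨fun x hx => Finset.mem_of_mem_erase (hsub hx), hcard⟩, ?_⟩
        exact Finset.mem_sdiff.2 ⟨hc, fun h => (Finset.mem_erase.1 (hsub h)).1 rfl⟩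
      · rintro ⟨S, c⟩ hp
        simp only [Finset.mem_sigma] at hp ⊢
        obtain ⟨hS, hc⟩ := hp
        obtain ⟨hsub, hcard⟩ := Finset.mem_powersetCard.1 hS
        obtain ⟨hcT, hcS⟩ := Finset.mem_sdiff.1 hc
        refine ⟨hcT, Finset.mem_powersetCard.2 ⟨fun x hx => Finset.mem_erase.2 ⟨?_, hsub hx⟩, hcard⟩⟩
        rintro rfl
        exact hcS hx
      · rintro ⟨c, S⟩ _; rfl
      · rintro ⟨S, c⟩ _; rfl
      · rintro ⟨c, S⟩ _; rfl
    rw [key]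
    rw [esym, Finset.mul_sum]
    refine Finset.sum_congr rfl fun S hS => ?_
    rw [Finset.sum_const, nsmul_eq_mul,
      Finset.card_sdiff_of_subset (Finset.mem_powersetCard.1 hS).1,
      (Finset.mem_powersetCard.1 hS).2]
    have : t ≤ #T := ht
    push_cast [this]
    ring
  · push_neg at ht
    have h1 : esym q T t = 0 := by
      rw [esym, Finset.powersetCard_eq_empty.2 ht, Finset.sum_empty]
    have h2 : ∀ c ∈ T, esym q (T.erase c) t = 0 := by
      intro c hc
      rw [esym, Finset.powersetCard_eq_empty.2, Finset.sum_empty]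
      rw [Finset.card_erase_of_mem hc]
      omega
    rw [h1, Finset.sum_congr rfl h2]
    simp

lemma esym_factorial_bound {q : ι → ℝ} (hq : ∀ c, 0 ≤ q c) (T : Finset ι)
    (hsum : ∑ c ∈ T, q c = 1) :
    ∀ t : ℕ, t ≤ #T → (t.factorial : ℝ) * esym q T t
      ≤ ∏ i ∈ Finset.range t, (((#T : ℝ) - i) / #T) := by
  intro t
  induction t with
  | zero => simp [esym_zero]
  | succ t ih =>
    intro ht
    have htT : t ≤ #T := Nat.le_of_succ_le ht
    have hM0 : 0 < (#T : ℝ) := by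
      have : 0 < #T := lt_of_lt_of_le (Nat.succ_pos t) ht
      exact_mod_cast this
    have cheb := (esym_erase_antivary hq T t).card_mul_sum_le_sum_mul_sum
    rw [esym_erase_sum, hsum, mul_one] at cheb
    have id1 := esym_succ_identity q T t
    have step : ((t:ℝ)+1) * esym q T (t+1) ≤ (((#T:ℝ) - t) / #T) * esym q T t := by
      rw [id1]
      rw [div_mul_eq_mul_div, le_div_iff₀ hM0]
      calc (∑ c ∈ T, q c * esym q (T.erase c) t) * #T
          = (#T : ℝ) * ∑ c ∈ T, (fun c => esym q (T.erase c) t) c * q c := by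
            rw [mul_comm]; congr 1; exact Finset.sum_congr rfl fun c _ => mul_comm _ _
        _ ≤ ((#T:ℝ) - t) * esym q T t := cheb
    have hfac : ((t+1).factorial : ℝ) * esym q T (t+1)
        = (t.factorial : ℝ) * (((t:ℝ)+1) * esym q T (t+1)) := by
      rw [Nat.factorial_succ]
      push_cast
      ring
    rw [hfac, Finset.prod_range_succ]
    have hnn : (0:ℝ) ≤ ((#T:ℝ) - t) / #T := by
      apply div_nonneg _ (le_of_lt hM0)
      have : (t:ℝ) ≤ #T := by exact_mod_cast htT
      linarith
    calc (t.factorial : ℝ) * (((t:ℝ)+1) * esym q T (t+1))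
        ≤ (t.factorial : ℝ) * ((((#T:ℝ) - t) / #T) * esym q T t) := by
          apply mul_le_mul_of_nonneg_left step
          exact_mod_cast Nat.zero_le _
      _ = (((t.factorial : ℝ)) * esym q T t) * (((#T:ℝ) - t) / #T) := by ring
      _ ≤ (∏ i ∈ Finset.range t, (((#T : ℝ) - i) / #T)) * (((#T:ℝ) - t) / #T) := by
          apply mul_le_mul_of_nonneg_right (ih htT) hnn

noncomputable def injTuples (T : Finset ι) (t : ℕ) : Finset (Fin t → ι) :=
  (Fintype.piFinset fun _ => T).filter Function.Injective

lemma sum_injTuples (q : ι → ℝ) : ∀ (t : ℕ) (T : Finset ι),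
    ∑ c ∈ injTuples T t, ∏ i, q (c i) = (t.factorial : ℝ) * esym q T t := by
  intro t
  induction t with
  | zero =>
    intro T
    rw [esym_zero]
    have : injTuples T 0 = {(fun i => (Fin.elim0 i : ι))} := by
      ext c
      simp only [injTuples, Finset.mem_filter, Fintype.mem_piFinset, Finset.mem_singleton]
      constructor
      · intro _; funext i; exact absurd i.2 (by omega)
      · rintro rfl
        exact ⟨fun i => Fin.elim0 i, fun i => Fin.elim0 i⟩
    rw [this]
    simp
  | succ t ih =>
    intro T
    have e2 := Finset.sum_sigma T (fun c0 => injTuples (T.erase c0) t)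
      (fun p => q p.1 * ∏ i, q (p.2 i))
    have key : ∑ c ∈ injTuples T (t+1), ∏ i, q (c i)
        = ∑ c0 ∈ T, ∑ d ∈ injTuples (T.erase c0) t, q c0 * ∏ i, q (d i) := by
      rw [← e2]
      refine Finset.sum_bij' (fun c _ => (⟨c 0, fun i => c i.succ⟩ : Σ _ : ι, Fin t → ι))
        (fun p _ => Fin.cons p.1 p.2) ?_ ?_ ?_ ?_ ?_
      · intro c hc
        simp only [injTuples, Finset.mem_filter, Fintype.mem_piFinset, Finset.mem_sigma] at hc ⊢
        obtain ⟨hmem, hinj⟩ := hc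
        refine ⟨hmem 0, fun i => Finset.mem_erase.2 ⟨fun h => ?_, hmem i.succ⟩,
          fun i j hij => ?_⟩
        · exact Fin.succ_ne_zero i (hinj h)
        · exact Fin.succ_injective t (hinj hij)
      · rintro ⟨c0, d⟩ hp
        simp only [injTuples, Finset.mem_filter, Fintype.mem_piFinset, Finset.mem_sigma] at hp ⊢
        obtain ⟨hc0, hd, hdinj⟩ := hp
        constructor
        · intro i
          refine Fin.cases ?_ ?_ i
          · simpa using hc0
          · intro j
            simpa using Finset.mem_of_mem_erase (hd j)
        · rw [Fin.cons_injective_iff]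
          refine ⟨fun ⟨j, hj⟩ => ?_, hdinj⟩
          exact (Finset.mem_erase.1 (hd j)).1 hj
      · intro c hc
        exact Fin.cons_self_tail c
      · rintro ⟨c0, d⟩ hp
        simp
      · intro c hc
        simp only []
        rw [Fin.prod_univ_succ]
    rw [key]
    have : ∀ c0 ∈ T, ∑ d ∈ injTuples (T.erase c0) t, q c0 * ∏ i, q (d i)
        = q c0 * ((t.factorial : ℝ) * esym q (T.erase c0) t) := by
      intro c0 _
      rw [← Finset.mul_sum, ih]
    rw [Finset.sum_congr rfl this]
    have : ∑ c0 ∈ T, q c0 * ((t.factorial : ℝ) * esym q (T.erase c0) t)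
        = (t.factorial : ℝ) * ∑ c0 ∈ T, q c0 * esym q (T.erase c0) t := by
      rw [Finset.mul_sum]; exact Finset.sum_congr rfl fun c0 _ => by ring
    rw [this, ← esym_succ_identity, Nat.factorial_succ]
    push_cast
    ring

section Dynamics

variable {n : ℕ} {f : Fin n → Fin n}

lemma IsCyclicPt.iterate {y : Fin n} (hy : IsCyclicPt f y) (k : ℕ) :
    IsCyclicPt f (f^[k] y) := by
  obtain ⟨p, hp, hpy⟩ := hy
  refine ⟨p, hp, ?_⟩
  rw [← Function.iterate_add_apply, Nat.add_comm, Function.iterate_add_apply, hpy]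

lemma IsCyclicPt.apply {y : Fin n} (hy : IsCyclicPt f y) : IsCyclicPt f (f y) := by
  simpa using hy.iterate 1

lemma heightOf_le_of_cyclic {x : Fin n} {k : ℕ} (h : IsCyclicPt f (f^[k] x)) :
    heightOf f x ≤ k := Nat.sInf_le h

lemma exists_cyclic_iterate (f : Fin n → Fin n) (x : Fin n) :
    ∃ i, IsCyclicPt f (f^[i] x) := by
  have hmap : ∀ i ∈ Finset.range (n + 1), f^[i] x ∈ (Finset.univ : Finset (Fin n)) :=
    fun i _ => Finset.mem_univ _
  obtain ⟨i, hi, j, hj, hne, heq⟩ :=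
    Finset.exists_ne_map_eq_of_card_lt_of_maps_to (by simp) hmap
  rw [Finset.mem_range] at hi hj
  wlog hij : i < j generalizing i j
  · exact this j hj i hi hne.symm heq.symm (by omega)
  refine ⟨i, j - i, by omega, ?_⟩
  rw [← Function.iterate_add_apply]
  rw [show j - i + i = j by omega, heq]

lemma heightOf_lt_card {x : Fin n} {T : Finset (Fin n)} (hT : ∀ i, f^[i] x ∈ T) :
    heightOf f x < #T := by
  have hmap : ∀ i ∈ Finset.range (#T + 1), f^[i] x ∈ T := fun i _ => hT i
  obtain ⟨i, hi, j, hj, hne, heq⟩ :=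
    Finset.exists_ne_map_eq_of_card_lt_of_maps_to (by simp) hmap
  rw [Finset.mem_range] at hi hj
  wlog hij : i < j generalizing i j
  · exact this j hj i hi hne.symm heq.symm (by omega)
  have hcyc : IsCyclicPt f (f^[i] x) := by
    refine ⟨j - i, by omega, ?_⟩
    rw [← Function.iterate_add_apply]
    rw [show j - i + i = j by omega, heq]
  calc heightOf f x ≤ i := heightOf_le_of_cyclic hcyc
    _ < #T := by omega

lemma cyclic_of_heightOf_le {x : Fin n} {k : ℕ} (h : heightOf f x ≤ k) :
    IsCyclicPt f (f^[k] x) := by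
  have hne : {i : ℕ | IsCyclicPt f (f^[i] x)}.Nonempty := exists_cyclic_iterate f x
  have hmem : IsCyclicPt f (f^[heightOf f x] x) := Nat.sInf_mem hne
  have : f^[k] x = f^[k - heightOf f x] (f^[heightOf f x] x) := by
    rw [← Function.iterate_add_apply]
    congr 1
    omega
  rw [this]
  exact hmem.iterate _

lemma cyclic_injOn {F : Fin n → Fin n} {x y : Fin n}
    (hx : IsCyclicPt F x) (hy : IsCyclicPt F y) (hxy : F x = F y) : x = y := by
  obtain ⟨p, hp, hpx⟩ := hx
  obtain ⟨r, hr, hry⟩ := hy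
  have hL : 1 ≤ p * r := Nat.one_le_iff_ne_zero.2 (by positivity)
  have hxL : F^[p * r] x = x := by
    rw [Function.iterate_mul]
    exact Function.iterate_fixed hpx r
  have hyL : F^[p * r] y = y := by
    rw [mul_comm, Function.iterate_mul]
    exact Function.iterate_fixed hry p
  have : F^[p * r] x = F^[p * r] y := by
    rw [show p * r = (p * r - 1) + 1 by omega]
    rw [Function.iterate_succ_apply, Function.iterate_succ_apply, hxy]
  rw [hxL, hyL] at this
  exact this

end Dynamics

section Counting
variable {n : ℕ}

noncomputable def Qfun {t : ℕ} (d : Fin t → Fin n) (P : Fin t → Finset (Fin n)) :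
    Fin n → Finset (Fin n) :=
  fun x => if h : ∃ i, d i = x then P (Classical.choose h) else Finset.univ

lemma Qfun_d {t : ℕ} {d : Fin t → Fin n} (hd : Function.Injective d)
    (P : Fin t → Finset (Fin n)) (i : Fin t) : Qfun d P (d i) = P i := by
  have h : ∃ j, d j = d i := ⟨i, rfl⟩
  rw [Qfun, dif_pos h]
  congr 1
  exact hd (Classical.choose_spec h)

lemma count_constrained {t : ℕ} (ht : t ≤ n) {d : Fin t → Fin n}
    (hd : Function.Injective d) (P : Fin t → Finset (Fin n)) :
    #((Finset.univ : Finset (Fin n → Fin n)).filter (fun b => ∀ i, b (d i) ∈ P i))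
      = (∏ i, #(P i)) * n ^ (n - t) := by
  have hset : (Finset.univ : Finset (Fin n → Fin n)).filter (fun b => ∀ i, b (d i) ∈ P i)
      = Fintype.piFinset (Qfun d P) := by
    ext b
    simp only [Finset.mem_filter, Finset.mem_univ, true_and, Fintype.mem_piFinset]
    constructor
    · intro hb x
      by_cases h : ∃ i, d i = x
      · obtain ⟨i, rfl⟩ := h
        rw [Qfun_d hd]
        exact hb i
      · rw [Qfun, dif_neg h]
        exact Finset.mem_univ _
    · intro hb i
      have := hb (d i)
      rwa [Qfun_d hd] at this
  rw [hset, Fintype.card_piFinset]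
  classical
  have himg : ∀ x ∈ (Finset.univ.image d)ᶜ, #(Qfun d P x) = n := by
    intro x hx
    rw [Finset.mem_compl, Finset.mem_image] at hx
    push_neg at hx
    rw [Qfun, dif_neg (by simpa using fun i => hx i (Finset.mem_univ i))]
    simp
  rw [← Finset.prod_mul_prod_compl (Finset.univ.image d)]
  congr 1
  · rw [Finset.prod_image (fun i _ j _ h => hd h)]
    exact Finset.prod_congr rfl fun i _ => by rw [Qfun_d hd]
  · rw [Finset.prod_congr rfl himg, Finset.prod_const]
    congr 1
    rw [Finset.card_compl, Finset.card_image_of_injective _ hd]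
    simp
end Counting

section Sums
variable {n : ℕ}

lemma sum1_bound {C : Finset (Fin n)} {q : Fin n → ℝ} (hq : ∀ c, 0 ≤ q c) (B : ℕ) :
    ∑ c ∈ injTuples C (B+1), ∏ i : Fin B, q (c i.succ)
      ≤ (#C : ℝ) * ((B.factorial : ℝ) * esym q C B) := by
  have hmaps : ∀ c ∈ injTuples C (B+1), (fun i : Fin B => c i.succ) ∈ injTuples C B := by
    intro c hc
    simp only [injTuples, Finset.mem_filter, Fintype.mem_piFinset] at hc ⊢
    exact ⟨fun i => hc.1 i.succ, fun i j hij => Fin.succ_injective _ (hc.2 hij)⟩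
  rw [← Finset.sum_fiberwise_of_maps_to hmaps (fun c => ∏ i : Fin B, q (c i.succ))]
  rw [← sum_injTuples, Finset.mul_sum]
  refine Finset.sum_le_sum fun d hd => ?_
  have heach : ∀ c ∈ (injTuples C (B+1)).filter (fun c => (fun i : Fin B => c i.succ) = d),
      (∏ i : Fin B, q (c i.succ)) = ∏ i, q (d i) := by
    intro c hc
    have := (Finset.mem_filter.1 hc).2
    rw [← this]
  rw [Finset.sum_congr rfl heach, Finset.sum_const, nsmul_eq_mul]
  apply mul_le_mul_of_nonneg_right _ (Finset.prod_nonneg fun i _ => hq _)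
  have hcard : #((injTuples C (B+1)).filter (fun c => (fun i : Fin B => c i.succ) = d)) ≤ #C := by
    apply Finset.card_le_card_of_injOn (fun c => c 0)
    · intro c hc
      have := (Finset.mem_filter.1 hc).1
      simp only [injTuples, Finset.mem_filter, Fintype.mem_piFinset] at this
      exact this.1 0
    · intro c1 h1 c2 h2 h0
      rw [Finset.mem_coe, Finset.mem_filter] at h1 h2
      funext i
      refine Fin.cases ?_ ?_ i
      · exact h0
      · intro j
        have e1 := congrFun h1.2 j
        have e2 := congrFun h2.2 j
        rw [e1, e2]
  exact_mod_cast hcard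

lemma range_prod_le_exp {m B : ℕ} (hBm : B ≤ m) (hm : 0 < m) :
    ∏ i ∈ Finset.range B, (((m : ℝ) - i) / m)
      ≤ Real.exp (-((B:ℝ) * ((B:ℝ) - 1) / 2) / m) := by
  have hm' : (0:ℝ) < m := by exact_mod_cast hm
  have step : ∀ i ∈ Finset.range B, ((m : ℝ) - i) / m ≤ Real.exp (-((i:ℝ)/m)) := by
    intro i hi
    have h1 : ((m : ℝ) - i) / m = -((i:ℝ)/m) + 1 := by field_simp; ring
    rw [h1]
    exact Real.add_one_le_exp _
  calc ∏ i ∈ Finset.range B, (((m : ℝ) - i) / m)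
      ≤ ∏ i ∈ Finset.range B, Real.exp (-((i:ℝ)/m)) := by
        apply Finset.prod_le_prod _ step
        intro i hi
        rw [Finset.mem_range] at hi
        have him : (i:ℝ) ≤ (m:ℝ) := by
          have : i ≤ m := le_trans (le_of_lt hi) hBm
          exact_mod_cast this
        apply div_nonneg (by linarith) hm'.le
    _ = Real.exp (∑ i ∈ Finset.range B, -((i:ℝ)/m)) := by rw [Real.exp_sum]
    _ = Real.exp (-((B:ℝ) * ((B:ℝ) - 1) / 2) / m) := by
        congr 1
        have hS : (∑ i ∈ Finset.range B, (i:ℝ)) = (B:ℝ) * ((B:ℝ) - 1) / 2 := by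
          have h2 := congrArg (Nat.cast : ℕ → ℝ) (Finset.sum_range_id_mul_two B)
          rcases Nat.eq_zero_or_pos B with rfl | hB
          · simp
          · push_cast [Nat.cast_sub hB] at h2
            push_cast
            linarith
        have : ∑ i ∈ Finset.range B, -((i:ℝ)/m) = -((∑ i ∈ Finset.range B, (i:ℝ))/m) := by
          rw [Finset.sum_neg_distrib, ← Finset.sum_div]
        rw [this, hS]
        ring

lemma card_HS_le {S : Finset (Fin n)} :
    #((Fintype.piFinset fun x : Fin n => if x ∈ S then S else {x}).filter
        (fun h => Set.InjOn h S)) ≤ (#S).factorial := by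
  classical
  have hmem : ∀ h ∈ (Fintype.piFinset fun x : Fin n => if x ∈ S then S else {x}).filter
      (fun h => Set.InjOn h S), (∀ x ∈ S, h x ∈ S) ∧ (∀ x ∉ S, h x = x) := by
    intro h hh
    have h1 := (Finset.mem_filter.1 hh).1
    rw [Fintype.mem_piFinset] at h1
    constructor
    · intro x hx
      have := h1 x
      rwa [if_pos hx] at this
    · intro x hx
      have := h1 x
      rw [if_neg hx, Finset.mem_singleton] at this
      exact this
  have step := Finset.card_le_card_of_injOn
    (s := (Fintype.piFinset fun x : Fin n => if x ∈ S then S else {x}).filter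
        (fun h => Set.InjOn h S))
    (f := fun (h : Fin n → Fin n) => fun x : ↥S =>
      if hx : h x.1 ∈ S then (⟨h x.1, hx⟩ : ↥S) else x)
    (t := (Finset.univ : Finset (↥S → ↥S)).filter Function.Injective) ?_ ?_
  · refine le_trans step ?_
    rw [← Fintype.card_subtype]
    rw [Fintype.card_congr (Equiv.subtypeInjectiveEquivEmbedding ↥S ↥S)]
    rw [Fintype.card_embedding_eq, Fintype.card_coe]
    rw [Nat.descFactorial_self]
  · intro h hh
    obtain ⟨hin, _⟩ := hmem h hh
    rw [Finset.mem_coe, Finset.mem_filter]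
    refine ⟨Finset.mem_univ _, ?_⟩
    intro ⟨x, hx⟩ ⟨y, hy⟩ hxy
    simp only [dif_pos (hin x hx), dif_pos (hin y hy)] at hxy
    have := (Finset.mem_filter.1 hh).2 hx hy (by simpa using congrArg Subtype.val hxy)
    exact Subtype.ext this
  · intro h1 hh1 h2 hh2 heq
    obtain ⟨hin1, hout1⟩ := hmem h1 hh1
    obtain ⟨hin2, hout2⟩ := hmem h2 hh2
    funext x
    by_cases hx : x ∈ S
    · have := congrFun heq ⟨x, hx⟩
      simp only [dif_pos (hin1 x hx), dif_pos (hin2 x hx)] at this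
      simpa using congrArg Subtype.val this
    · rw [hout1 x hx, hout2 x hx]
end Sums

section Main
variable {n : ℕ}

lemma mem_cyclicPts {f : Fin n → Fin n} {x : Fin n} :
    x ∈ cyclicPts f ↔ IsCyclicPt f x := by
  simp [cyclicPts]

lemma iterate_mem_cyclic {f : Fin n → Fin n} {A : ℕ} (hh : height f ≤ A) (z : Fin n) :
    f^[A] z ∈ cyclicPts f := by
  have h1 : heightOf f z ≤ A := le_trans (Finset.le_sup (Finset.mem_univ z)) hh
  exact mem_cyclicPts.2 (cyclic_of_heightOf_le h1)

lemma bad_subset (f : Fin n → Fin n) (A B : ℕ) (hh : height f ≤ A) :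
    ((Finset.univ : Finset (Fin n → Fin n)).filter
      (fun b => B < #((cyclicPts f).filter (IsCyclicPt (fun y => f^[A] (b y)))) ∨
         B < (cyclicPts f).sup (heightOf (fun y => f^[A] (b y)))))
    ⊆ ((injTuples (cyclicPts f) (B+1)).biUnion (fun c =>
         Finset.univ.filter (fun b => ∀ i : Fin B, f^[A] (b (c i.castSucc)) = c i.succ)))
      ∪ (((cyclicPts f).powerset.filter (fun S => B < #S)).biUnion (fun S =>
          ((Fintype.piFinset fun x => if x ∈ S then S else {x}).filter
            (fun h => Set.InjOn h S)).biUnion (fun h =>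
              Finset.univ.filter (fun b => ∀ x ∈ S, f^[A] (b x) = h x)))) := by
  intro b hb
  rw [Finset.mem_filter] at hb
  set F : Fin n → Fin n := fun y => f^[A] (b y) with hF
  have hFC : ∀ y, F y ∈ cyclicPts f := fun y => iterate_mem_cyclic hh (b y)
  rcases hb.2 with hcyc | hht
  · -- many cyclic points: second union
    apply Finset.mem_union_right
    set S := (cyclicPts f).filter (IsCyclicPt F) with hS
    have hmapsto : ∀ x ∈ S, F x ∈ S := by
      intro x hx
      rw [hS, Finset.mem_filter] at hx ⊢
      exact ⟨hFC x, hx.2.apply⟩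
    refine Finset.mem_biUnion.2 ⟨S, ?_, ?_⟩
    · rw [Finset.mem_filter, Finset.mem_powerset]
      exact ⟨Finset.filter_subset _ _, hcyc⟩
    refine Finset.mem_biUnion.2 ⟨fun x => if x ∈ S then F x else x, ?_, ?_⟩
    · rw [Finset.mem_filter]
      constructor
      · rw [Fintype.mem_piFinset]
        intro x
        by_cases hx : x ∈ S
        · simp only [if_pos hx]
          exact hmapsto x hx
        · simp only [if_neg hx]
          exact Finset.mem_singleton_self x
      · intro x hx y hy hxy
        rw [Finset.mem_coe] at hx hy
        simp only [if_pos hx, if_pos hy] at hxy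
        exact cyclic_injOn (Finset.mem_filter.1 hx).2 (Finset.mem_filter.1 hy).2 hxy
    · rw [Finset.mem_filter]
      refine ⟨Finset.mem_univ _, fun x hx => ?_⟩
      simp only [if_pos hx]
      rfl
  · -- large height: first union
    apply Finset.mem_union_left
    obtain ⟨x, hxC, hxh⟩ := Finset.lt_sup_iff.1 hht
    refine Finset.mem_biUnion.2 ⟨fun i : Fin (B+1) => F^[(i:ℕ)] x, ?_, ?_⟩
    · rw [injTuples, Finset.mem_filter]
      constructor
      · rw [Fintype.mem_piFinset]
        intro i
        rcases Nat.eq_zero_or_pos (i:ℕ) with h0 | hpos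
        · rw [h0]
          simpa using hxC
        · rw [show (i:ℕ) = ((i:ℕ)-1)+1 by omega, Function.iterate_succ_apply']
          exact hFC _
      · intro i j hij
        have hij' : F^[(i:ℕ)] x = F^[(j:ℕ)] x := hij
        by_contra hne
        have hvne : (i:ℕ) ≠ (j:ℕ) := fun h => hne (Fin.ext h)
        wlog hlt : (i:ℕ) < (j:ℕ) generalizing i j
        · exact this (i := j) (j := i) hij.symm hij'.symm (Ne.symm hne) (Ne.symm hvne) (by omega)
        have hcy : IsCyclicPt F (F^[(i:ℕ)] x) := by
          refine ⟨(j:ℕ) - (i:ℕ), by omega, ?_⟩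
          rw [← Function.iterate_add_apply, show (j:ℕ)-(i:ℕ)+(i:ℕ) = (j:ℕ) by omega, hij']
        have := heightOf_le_of_cyclic hcy
        have hiB : (i:ℕ) ≤ B := by omega
        omega
    · rw [Finset.mem_filter]
      refine ⟨Finset.mem_univ _, fun i => ?_⟩
      show f^[A] (b (F^[((i.castSucc :  Fin (B+1)):ℕ)] x)) = F^[((i.succ : Fin (B+1)):ℕ)] x
      rw [Fin.coe_castSucc, Fin.val_succ, Function.iterate_succ_apply']
end Main

section Main2
variable {n : ℕ}

lemma cast_prod_pow (hn : 0 < n) {ι : Type*} (S : Finset ι) (N : ι → ℕ) (h : #S ≤ n) :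
    (((∏ x ∈ S, N x) * n ^ (n - #S) : ℕ) : ℝ) = (∏ x ∈ S, ((N x : ℝ)/(n:ℝ))) * (n:ℝ)^n := by
  have hn' : (0:ℝ) < n := by exact_mod_cast hn
  push_cast
  rw [Finset.prod_div_distrib, Finset.prod_const]
  rw [div_mul_eq_mul_div, eq_div_iff (by positivity)]
  rw [mul_assoc, ← pow_add]
  congr 2
  omega

lemma range_prod_mono {m a b : ℕ} (hab : a ≤ b) (hbm : b ≤ m) :
    ∏ i ∈ Finset.range b, (((m:ℝ) - i)/m) ≤ ∏ i ∈ Finset.range a, (((m:ℝ) - i)/m) := by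
  rcases Nat.eq_zero_or_pos b with rfl | hb
  · interval_cases a
    exact le_refl _
  have hm : 0 < m := lt_of_lt_of_le hb hbm
  have hm' : (0:ℝ) < m := by exact_mod_cast hm
  have hfac : ∀ i ∈ Finset.range b, (0:ℝ) ≤ ((m:ℝ) - i)/m ∧ ((m:ℝ) - i)/m ≤ 1 := by
    intro i hi
    rw [Finset.mem_range] at hi
    have : (i:ℝ) ≤ m := by
      have : i ≤ m := by omega
      exact_mod_cast this
    constructor
    · apply div_nonneg (by linarith) hm'.le
    · rw [div_le_one hm']
      have : (0:ℝ) ≤ (i:ℝ) := Nat.cast_nonneg i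
      linarith
  rw [← Finset.prod_range_mul_prod_Ico _ hab]
  have h1 : (0:ℝ) ≤ ∏ i ∈ Finset.range a, (((m:ℝ) - i)/m) :=
    Finset.prod_nonneg fun i hi => (hfac i (by rw [Finset.mem_range] at hi ⊢; omega)).1
  have h2 : ∏ i ∈ Finset.Ico a b, (((m:ℝ) - i)/m) ≤ 1 := by
    apply Finset.prod_le_one
    · intro i hi
      rw [Finset.mem_Ico] at hi
      exact (hfac i (by rw [Finset.mem_range]; omega)).1
    · intro i hi
      rw [Finset.mem_Ico] at hi
      exact (hfac i (by rw [Finset.mem_range]; omega)).2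
  have h3 : (0:ℝ) ≤ ∏ i ∈ Finset.Ico a b, (((m:ℝ) - i)/m) :=
    Finset.prod_nonneg fun i hi => by
      rw [Finset.mem_Ico] at hi
      exact (hfac i (by rw [Finset.mem_range]; omega)).1
  calc _ ≤ (∏ i ∈ Finset.range a, (((m:ℝ) - i)/m)) * 1 := by
        apply mul_le_mul_of_nonneg_left h2 h1
    _ = _ := mul_one _

lemma sum2_bound {C : Finset (Fin n)} {q : Fin n → ℝ} (hq : ∀ c, 0 ≤ q c)
    (hqs : ∑ c ∈ C, q c = 1) (B : ℕ) (hB : B < #C) :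
    ∑ S ∈ C.powerset.filter (fun S => B < #S), ((#S).factorial : ℝ) * ∏ y ∈ S, q y
      ≤ ((#C : ℝ) + 1) * ∏ i ∈ Finset.range (B+1), (((#C:ℝ) - i)/(#C:ℝ)) := by
  classical
  rw [Finset.sum_filter, Finset.powerset_card_disjiUnion]; erw [Finset.sum_disjiUnion]
  have inner : ∀ j ∈ Finset.range (#C + 1),
      ∑ S ∈ C.powersetCard j, (if B < #S then ((#S).factorial : ℝ) * ∏ y ∈ S, q y else 0)
        = if B < j then ((j.factorial : ℝ) * esym q C j) else 0 := by
    intro j hj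
    have : ∀ S ∈ C.powersetCard j,
        (if B < #S then ((#S).factorial : ℝ) * ∏ y ∈ S, q y else 0)
        = if B < j then ((j.factorial : ℝ) * ∏ y ∈ S, q y) else 0 := by
      intro S hS
      rw [(Finset.mem_powersetCard.1 hS).2]
    rw [Finset.sum_congr rfl this]
    by_cases hBj : B < j
    · simp only [if_pos hBj]
      rw [esym, Finset.mul_sum]
    · simp only [if_neg hBj]
      exact Finset.sum_const_zero
  rw [Finset.sum_congr rfl inner]
  have hterm : ∀ j ∈ Finset.range (#C + 1),
      (if B < j then ((j.factorial : ℝ) * esym q C j) else 0)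
        ≤ ∏ i ∈ Finset.range (B+1), (((#C:ℝ) - i)/(#C:ℝ)) := by
    intro j hj
    rw [Finset.mem_range] at hj
    have hD0 : (0:ℝ) ≤ ∏ i ∈ Finset.range (B+1), (((#C:ℝ) - i)/(#C:ℝ)) := by
      apply Finset.prod_nonneg
      intro i hi
      rw [Finset.mem_range] at hi
      have hiC : (i:ℝ) ≤ (#C:ℝ) := by
        have : i ≤ #C := by omega
        exact_mod_cast this
      have : (0:ℝ) < (#C:ℝ) := by
        have : 0 < #C := by omega
        exact_mod_cast this
      apply div_nonneg (by linarith) this.le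
    by_cases hBj : B < j
    · simp only [if_pos hBj]
      calc (j.factorial : ℝ) * esym q C j
          ≤ ∏ i ∈ Finset.range j, (((#C:ℝ) - i)/(#C:ℝ)) :=
            esym_factorial_bound hq C hqs j (by omega)
        _ ≤ ∏ i ∈ Finset.range (B+1), (((#C:ℝ) - i)/(#C:ℝ)) :=
            range_prod_mono (by omega) (by omega)
    · simp only [if_neg hBj]
      exact hD0
  calc ∑ j ∈ Finset.range (#C + 1), (if B < j then ((j.factorial : ℝ) * esym q C j) else 0)
      ≤ ∑ _j ∈ Finset.range (#C + 1), ∏ i ∈ Finset.range (B+1), (((#C:ℝ) - i)/(#C:ℝ)) :=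
        Finset.sum_le_sum hterm
    _ = ((#C : ℝ) + 1) * ∏ i ∈ Finset.range (B+1), (((#C:ℝ) - i)/(#C:ℝ)) := by
        rw [Finset.sum_const, Finset.card_range, nsmul_eq_mul]
        push_cast
        ring
end Main2

section Main3
variable {n : ℕ}

lemma ev2_card (A : ℕ) (f : Fin n → Fin n) {S : Finset (Fin n)} {h : Fin n → Fin n} :
    #(Finset.univ.filter fun b : Fin n → Fin n => ∀ x ∈ S, f^[A] (b x) = h x)
      = (∏ x ∈ S, #(Finset.univ.filter fun z : Fin n => f^[A] z = h x)) * n ^ (n - #S) := by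
  classical
  have hSn : #S ≤ n := by
    have := Finset.card_le_univ S
    simpa using this
  set e := S.orderIsoOfFin rfl with he
  set d : Fin (#S) → Fin n := fun i => ((e i : ↥S) : Fin n) with hd
  have hdinj : Function.Injective d := by
    intro i j hij
    exact e.injective (Subtype.ext hij)
  have hdmem : ∀ i, d i ∈ S := fun i => (e i).2
  have hset : (Finset.univ.filter fun b : Fin n → Fin n => ∀ x ∈ S, f^[A] (b x) = h x)
      = Finset.univ.filter (fun b : Fin n → Fin n =>
          ∀ i, b (d i) ∈ Finset.univ.filter (fun z : Fin n => f^[A] z = h (d i))) := by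
    ext b
    simp only [Finset.mem_filter, Finset.mem_univ, true_and]
    constructor
    · intro hb i
      exact hb (d i) (hdmem i)
    · intro hb x hx
      have := hb (e.symm ⟨x, hx⟩)
      simpa [hd] using this
  rw [hset, count_constrained hSn hdinj]
  congr 1
  rw [← Finset.prod_coe_sort S (fun x => #(Finset.univ.filter fun z : Fin n => f^[A] z = h x))]
  exact (Equiv.prod_comp e.toEquiv
    (fun x : ↥S => #(Finset.univ.filter fun z : Fin n => f^[A] z = h (x : Fin n))))

lemma main_card_bound {A B : ℕ} (f : Fin n → Fin n) (hh : height f ≤ A)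
    (hB : B < #(cyclicPts f)) :
    (#((Finset.univ : Finset (Fin n → Fin n)).filter
        (fun b => B < #((cyclicPts f).filter (IsCyclicPt (fun y => f^[A] (b y)))) ∨
          B < (cyclicPts f).sup (heightOf (fun y => f^[A] (b y))))) : ℝ)
      ≤ (2*(n:ℝ)+1) *
          (Real.exp (-((B:ℝ)*((B:ℝ)-1)/2) / (#(cyclicPts f) : ℝ)) * (n:ℝ)^n) := by
  classical
  set C := cyclicPts f with hC
  have hm0 : 0 < #C := lt_of_le_of_lt (Nat.zero_le B) hB
  obtain ⟨c0, hc0⟩ := Finset.card_pos.1 hm0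
  have hn0 : 0 < n := c0.pos
  have hmn : #C ≤ n := by simpa using Finset.card_le_univ C
  have hBn : B ≤ n := le_trans (le_of_lt hB) hmn
  have hn' : (0:ℝ) < n := by exact_mod_cast hn0
  have hm' : (0:ℝ) < (#C:ℝ) := by exact_mod_cast hm0
  set Nc : Fin n → ℕ := fun c => #(Finset.univ.filter fun z : Fin n => f^[A] z = c) with hNc
  set q : Fin n → ℝ := fun c => (Nc c : ℝ)/n with hqdef
  have hq0 : ∀ c, 0 ≤ q c := fun c => div_nonneg (Nat.cast_nonneg _) hn'.le
  have hqsum : ∑ c ∈ C, q c = 1 := by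
    have hcount : #(Finset.univ : Finset (Fin n)) = ∑ c ∈ C, Nc c :=
      Finset.card_eq_sum_card_fiberwise (fun z _ => iterate_mem_cyclic hh z)
    have : ∑ c ∈ C, q c = ((∑ c ∈ C, Nc c : ℕ) : ℝ)/n := by
      rw [hqdef, ← Finset.sum_div]
      push_cast
      rfl
    rw [this, ← hcount]
    simp only [Finset.card_univ, Fintype.card_fin]
    field_simp
  -- the two unions
  have hcard := Finset.card_le_card (bad_subset f A B hh)
  have hcard2 := le_trans hcard (Finset.card_union_le _ _)
  have hcard3 := le_trans hcard2 (Nat.add_le_add (Finset.card_biUnion_le)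
    (Finset.card_biUnion_le))
  -- first sum
  have hev1 : ∀ c ∈ injTuples C (B+1),
      (#(Finset.univ.filter (fun b : Fin n → Fin n =>
          ∀ i : Fin B, f^[A] (b (c i.castSucc)) = c i.succ)) : ℝ)
        = (∏ i : Fin B, q (c i.succ)) * (n:ℝ)^n := by
    intro c hc
    have hcinj : Function.Injective c := (Finset.mem_filter.1 hc).2
    have hdinj : Function.Injective (fun i : Fin B => c i.castSucc) :=
      fun i j hij => Fin.castSucc_injective _ (hcinj hij)
    have hset : (Finset.univ.filter (fun b : Fin n → Fin n =>
        ∀ i : Fin B, f^[A] (b (c i.castSucc)) = c i.succ))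
        = Finset.univ.filter (fun b : Fin n → Fin n =>
            ∀ i : Fin B, b (c i.castSucc) ∈
              Finset.univ.filter (fun z : Fin n => f^[A] z = c i.succ)) := by
      ext b
      simp only [Finset.mem_filter, Finset.mem_univ, true_and]
    rw [hset, count_constrained hBn hdinj]
    have := cast_prod_pow hn0 (Finset.univ : Finset (Fin B))
      (fun i => Nc (c i.succ)) (by simpa using hBn)
    simpa [hqdef, hNc, Finset.prod_div_distrib] using this
  have hsum1 : ∑ c ∈ injTuples C (B+1),
      (#(Finset.univ.filter (fun b : Fin n → Fin n =>
          ∀ i : Fin B, f^[A] (b (c i.castSucc)) = c i.succ)) : ℝ)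
        ≤ ((#C:ℝ) * ((B.factorial : ℝ) * esym q C B)) * (n:ℝ)^n := by
    rw [Finset.sum_congr rfl hev1, ← Finset.sum_mul]
    apply mul_le_mul_of_nonneg_right (sum1_bound hq0 B) (by positivity)
  -- second sum
  have hev2eq : ∀ S ∈ C.powerset.filter (fun S => B < #S),
      ∀ h ∈ (Fintype.piFinset fun x : Fin n => if x ∈ S then S else {x}).filter
            (fun h => Set.InjOn h S),
      (#(Finset.univ.filter fun b : Fin n → Fin n => ∀ x ∈ S, f^[A] (b x) = h x) : ℝ)
        = (∏ y ∈ S, q y) * (n:ℝ)^n := by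
    intro S hS h hhS
    rw [ev2_card A f]
    have hSn : #S ≤ n := by simpa using Finset.card_le_univ S
    have hcast := cast_prod_pow hn0 S (fun x => Nc (h x)) hSn
    rw [show (∏ x ∈ S, #(Finset.univ.filter fun z : Fin n => f^[A] z = h x))
        = ∏ x ∈ S, Nc (h x) from rfl]
    rw [hcast]
    congr 1
    -- ∏ x ∈ S, q (h x) = ∏ y ∈ S, q y  since h is a bijection of S
    rw [Finset.mem_filter] at hhS
    have hinj : Set.InjOn h S := hhS.2
    have hmem := hhS.1
    rw [Fintype.mem_piFinset] at hmem
    have hin : ∀ x ∈ S, h x ∈ S := by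
      intro x hx
      have := hmem x
      rwa [if_pos hx] at this
    have himg : S.image h = S := by
      apply Finset.eq_of_subset_of_card_le
      · intro y hy
        obtain ⟨x, hx, rfl⟩ := Finset.mem_image.1 hy
        exact hin x hx
      · rw [Finset.card_image_of_injOn hinj]
    conv_rhs => rw [← himg]
    rw [Finset.prod_image (fun x hx y hy hxy => hinj hx hy hxy)]
  have hsum2 : ∑ S ∈ C.powerset.filter (fun S => B < #S),
      ∑ h ∈ (Fintype.piFinset fun x : Fin n => if x ∈ S then S else {x}).filter
            (fun h => Set.InjOn h S),
      (#(Finset.univ.filter fun b : Fin n → Fin n => ∀ x ∈ S, f^[A] (b x) = h x) : ℝ)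
        ≤ (((#C : ℝ) + 1) * ∏ i ∈ Finset.range (B+1), (((#C:ℝ) - i)/(#C:ℝ))) * (n:ℝ)^n := by
    have hstep : ∀ S ∈ C.powerset.filter (fun S => B < #S),
        ∑ h ∈ (Fintype.piFinset fun x : Fin n => if x ∈ S then S else {x}).filter
              (fun h => Set.InjOn h S),
        (#(Finset.univ.filter fun b : Fin n → Fin n => ∀ x ∈ S, f^[A] (b x) = h x) : ℝ)
          ≤ (((#S).factorial : ℝ) * ∏ y ∈ S, q y) * (n:ℝ)^n := by
      intro S hS
      rw [Finset.sum_congr rfl (hev2eq S hS)]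
      rw [Finset.sum_const, nsmul_eq_mul]
      have hq1 : (0:ℝ) ≤ (∏ y ∈ S, q y) * (n:ℝ)^n := by
        apply mul_nonneg (Finset.prod_nonneg fun y _ => hq0 y) (by positivity)
      have := card_HS_le (S := S)
      calc (#((Fintype.piFinset fun x : Fin n => if x ∈ S then S else {x}).filter
            (fun h => Set.InjOn h S)) : ℝ) * ((∏ y ∈ S, q y) * (n:ℝ)^n)
          ≤ ((#S).factorial : ℝ) * ((∏ y ∈ S, q y) * (n:ℝ)^n) := by
            apply mul_le_mul_of_nonneg_right _ hq1
            exact_mod_cast this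
        _ = (((#S).factorial : ℝ) * ∏ y ∈ S, q y) * (n:ℝ)^n := by ring
    calc _ ≤ ∑ S ∈ C.powerset.filter (fun S => B < #S),
        (((#S).factorial : ℝ) * ∏ y ∈ S, q y) * (n:ℝ)^n := Finset.sum_le_sum hstep
      _ = (∑ S ∈ C.powerset.filter (fun S => B < #S),
            ((#S).factorial : ℝ) * ∏ y ∈ S, q y) * (n:ℝ)^n := by rw [Finset.sum_mul]
      _ ≤ _ := by
          apply mul_le_mul_of_nonneg_right (sum2_bound hq0 hqsum B hB) (by positivity)
  -- combine
  have hcast3 : (#((Finset.univ : Finset (Fin n → Fin n)).filter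
        (fun b => B < #(C.filter (IsCyclicPt (fun y => f^[A] (b y)))) ∨
          B < C.sup (heightOf (fun y => f^[A] (b y))))) : ℝ)
      ≤ (∑ c ∈ injTuples C (B+1),
          (#(Finset.univ.filter (fun b : Fin n → Fin n =>
            ∀ i : Fin B, f^[A] (b (c i.castSucc)) = c i.succ)) : ℝ))
        + ∑ S ∈ C.powerset.filter (fun S => B < #S),
          ∑ h ∈ (Fintype.piFinset fun x : Fin n => if x ∈ S then S else {x}).filter
                (fun h => Set.InjOn h S),
          (#(Finset.univ.filter fun b : Fin n → Fin n => ∀ x ∈ S, f^[A] (b x) = h x) : ℝ) := by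
    have hcard4 := le_trans hcard3 (Nat.add_le_add_left
      (Finset.sum_le_sum fun S _ => Finset.card_biUnion_le) _)
    refine le_trans (Nat.cast_le.2 hcard4) (le_of_eq ?_)
    push_cast
    rfl
  have hfinal := le_trans hcast3 (add_le_add hsum1 hsum2)
  -- now bound by exponential
  have hexp1 : (B.factorial : ℝ) * esym q C B
      ≤ Real.exp (-((B:ℝ)*((B:ℝ)-1)/2) / (#C : ℝ)) := by
    calc (B.factorial : ℝ) * esym q C B
        ≤ ∏ i ∈ Finset.range B, (((#C:ℝ) - i)/(#C:ℝ)) :=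
          esym_factorial_bound hq0 C hqsum B (le_of_lt hB)
      _ ≤ Real.exp (-((B:ℝ)*((B:ℝ)-1)/2) / (#C : ℝ)) :=
          range_prod_le_exp (le_of_lt hB) hm0
  have hexp2 : ∏ i ∈ Finset.range (B+1), (((#C:ℝ) - i)/(#C:ℝ))
      ≤ Real.exp (-((B:ℝ)*((B:ℝ)-1)/2) / (#C : ℝ)) := by
    calc ∏ i ∈ Finset.range (B+1), (((#C:ℝ) - i)/(#C:ℝ))
        ≤ ∏ i ∈ Finset.range B, (((#C:ℝ) - i)/(#C:ℝ)) :=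
          range_prod_mono (Nat.le_succ B) hB
      _ ≤ _ := range_prod_le_exp (le_of_lt hB) hm0
  set Ex := Real.exp (-((B:ℝ)*((B:ℝ)-1)/2) / (#C : ℝ)) with hEx
  have hEx0 : 0 ≤ Ex := Real.exp_nonneg _
  have hmnR : (#C : ℝ) ≤ n := by exact_mod_cast hmn
  calc (#((Finset.univ : Finset (Fin n → Fin n)).filter
        (fun b => B < #(C.filter (IsCyclicPt (fun y => f^[A] (b y)))) ∨
          B < C.sup (heightOf (fun y => f^[A] (b y))))) : ℝ)
      ≤ ((#C:ℝ) * ((B.factorial : ℝ) * esym q C B)) * (n:ℝ)^n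
        + (((#C : ℝ) + 1) * ∏ i ∈ Finset.range (B+1), (((#C:ℝ) - i)/(#C:ℝ))) * (n:ℝ)^n :=
        hfinal
    _ ≤ ((#C:ℝ) * Ex) * (n:ℝ)^n + (((#C : ℝ) + 1) * Ex) * (n:ℝ)^n := by
        apply add_le_add
        · apply mul_le_mul_of_nonneg_right _ (by positivity)
          exact mul_le_mul_of_nonneg_left hexp1 hm'.le
        · apply mul_le_mul_of_nonneg_right _ (by positivity)
          exact mul_le_mul_of_nonneg_left hexp2 (by linarith)
    _ = ((2*(#C:ℝ)+1) * Ex) * (n:ℝ)^n := by ring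
    _ ≤ (2*(n:ℝ)+1) * (Ex * (n:ℝ)^n) := by
        rw [← mul_assoc]
        have h9 : (0:ℝ) ≤ Ex * (n:ℝ)^n := by positivity
        have h8 : (2*(#C:ℝ)+1) ≤ (2*(n:ℝ)+1) := by linarith
        rw [mul_assoc, mul_assoc]
        exact mul_le_mul_of_nonneg_right h8 h9
end Main3

section Empty
variable {n : ℕ}

lemma bad_empty {A B : ℕ} (f : Fin n → Fin n) (hh : height f ≤ A)
    (hB : #(cyclicPts f) ≤ B) :
    ((Finset.univ : Finset (Fin n → Fin n)).filter
      (fun b => B < #((cyclicPts f).filter (IsCyclicPt (fun y => f^[A] (b y)))) ∨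
         B < (cyclicPts f).sup (heightOf (fun y => f^[A] (b y))))) = ∅ := by
  rw [Finset.filter_eq_empty_iff]
  intro b _
  push_neg
  constructor
  · exact le_trans (Finset.card_filter_le _ _) hB
  · apply Finset.sup_le
    intro x hx
    have htraj : ∀ i, (fun y => f^[A] (b y))^[i] x ∈ cyclicPts f := by
      intro i
      cases i with
      | zero => simpa using hx
      | succ k =>
        rw [Function.iterate_succ_apply']
        exact iterate_mem_cyclic hh _
    have := heightOf_lt_card htraj
    omega
end Empty

section Asym
open Filter Real

lemma eventually_good (ε : ℝ) (hε0 : 0 < ε) (hε1 : ε < 1/8) :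
    ∀ᶠ x : ℝ in atTop,
      (1 ≤ x ∧ 1 ≤ x ^ ((1:ℝ)/2 + ε) ∧ 4 ≤ x ^ ((1:ℝ)/4 + 2*ε)) ∧
      Real.log (2*x+1) + x^(ε/4) ≤ x^(3*ε)/8 := by
  have h1 : ∀ᶠ x : ℝ in atTop, (1:ℝ) ≤ x := eventually_ge_atTop 1
  have h2 : ∀ᶠ x : ℝ in atTop, (1:ℝ) ≤ x ^ ((1:ℝ)/2 + ε) :=
    (tendsto_rpow_atTop (by linarith)).eventually_ge_atTop 1
  have h3 : ∀ᶠ x : ℝ in atTop, (4:ℝ) ≤ x ^ ((1:ℝ)/4 + 2*ε) :=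
    (tendsto_rpow_atTop (by linarith)).eventually_ge_atTop 4
  have h4 : ∀ᶠ x : ℝ in atTop, (3:ℝ) ≤ x := eventually_ge_atTop 3
  have h5 : ∀ᶠ x : ℝ in atTop, Real.log x ≤ x^(3*ε)/32 := by
    have := (isLittleO_log_rpow_atTop (show (0:ℝ) < 3*ε by linarith)).def
      (show (0:ℝ) < 1/32 by norm_num)
    filter_upwards [this, eventually_ge_atTop 1] with x hx hx1
    have hlog : 0 ≤ Real.log x := Real.log_nonneg hx1
    have hr : 0 ≤ x^(3*ε) := Real.rpow_nonneg (by linarith) _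
    rw [Real.norm_eq_abs, Real.norm_eq_abs, abs_of_nonneg hlog, abs_of_nonneg hr] at hx
    linarith
  have h6 : ∀ᶠ x : ℝ in atTop, (16:ℝ) ≤ x ^ (3*ε - ε/4) :=
    (tendsto_rpow_atTop (by linarith)).eventually_ge_atTop 16
  filter_upwards [h1, h2, h3, h4, h5, h6] with x hx1 hx2 hx3 hx4 hx5 hx6
  refine ⟨⟨hx1, hx2, hx3⟩, ?_⟩
  have hx0 : (0:ℝ) < x := by linarith
  have hlog1 : Real.log (2*x+1) ≤ 2 * Real.log x := by
    have hle : 2*x+1 ≤ x^2 := by nlinarith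
    calc Real.log (2*x+1) ≤ Real.log (x^2) := Real.log_le_log (by linarith) hle
      _ = 2 * Real.log x := by
          rw [Real.log_pow]
          push_cast
          ring
  have hsplit : x^(3*ε) = x^(ε/4) * x^(3*ε - ε/4) := by
    rw [← Real.rpow_add hx0]
    ring_nf
  have hx74 : x^(ε/4) ≤ x^(3*ε)/16 := by
    rw [hsplit]
    have hp : (0:ℝ) < x^(ε/4) := Real.rpow_pos_of_pos hx0 _
    rw [le_div_iff₀ (by norm_num : (0:ℝ) < 16)]
    nlinarith
  calc Real.log (2*x+1) + x^(ε/4) ≤ 2 * Real.log x + x^(3*ε)/16 := by linarith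
    _ ≤ x^(3*ε)/16 + x^(3*ε)/16 := by linarith
    _ = x^(3*ε)/8 := by ring
end Asym



/-- For `0 < ε < 1/8`, for `n` large enough: let `f` be a fixed mapping on `[n]` with at
most `α_n` cyclic points and height at most `α_n`, and let `C` be its set of cyclic
points. If for each `x ∈ C` a value `b(x)` is chosen uniformly and independently in `[n]`
and `F : C → C` is defined by `F(x) = f^[α_n](b(x))` (which lands in `C` since the height
of `f` is at most `α_n`; cyclic points and height of `F` are expressed below through the
globally defined map `y ↦ f^[α_n](b(y))`, whose restriction to `C` is `F`), then the
probability that `F` has more than `β_n` cyclic points or height greater than `β_n` is at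
most `exp(-n^(ε/4))`. -/
theorem second_round_cyclic_height_bound (ε : ℝ) (hε0 : 0 < ε) (hε1 : ε < 1/8) :
    ∃ N : ℕ, ∀ n ≥ N, ∀ f : Fin n → Fin n,
      (cyclicPts f).card ≤ alphaN ε n → height f ≤ alphaN ε n →
      (((Finset.univ : Finset (Fin n → Fin n)).filter
          (fun b =>
            ((cyclicPts f).filter
                (IsCyclicPt (fun y => f^[alphaN ε n] (b y)))).card > betaN ε n ∨
            (cyclicPts f).sup (heightOf (fun y => f^[alphaN ε n] (b y))) > betaN ε n)).card : ℝ)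
        / (Fintype.card (Fin n → Fin n) : ℝ)
        ≤ Real.exp (-(n : ℝ) ^ (ε/4)) := by
  have hnat : ∀ᶠ n : ℕ in Filter.atTop,
      (1 ≤ (n:ℝ) ∧ 1 ≤ (n:ℝ) ^ ((1:ℝ)/2 + ε) ∧ 4 ≤ (n:ℝ) ^ ((1:ℝ)/4 + 2*ε)) ∧
      Real.log (2*(n:ℝ)+1) + (n:ℝ)^(ε/4) ≤ (n:ℝ)^(3*ε)/8 :=
    tendsto_natCast_atTop_atTop.eventually (eventually_good ε hε0 hε1)
  obtain ⟨N, hN⟩ := Filter.eventually_atTop.1 hnat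
  refine ⟨N, fun n hn f hcard hheight => ?_⟩
  obtain ⟨⟨hx1, hα1, hβ4⟩, hmain⟩ := hN n hn
  set x : ℝ := (n:ℝ) with hxdef
  have hx0 : (0:ℝ) < x := by linarith
  have hn0 : 0 < n := by
    have h := hx0
    rw [hxdef] at h
    exact_mod_cast h
  set A := alphaN ε n with hA
  set B := betaN ε n with hB
  have hcardfun : (Fintype.card (Fin n → Fin n) : ℝ) = x^n := by
    rw [Fintype.card_fun, Fintype.card_fin]
    push_cast
    rfl
  rcases le_or_gt (#(cyclicPts f)) B with hle | hlt
  · have hempty : ((Finset.univ : Finset (Fin n → Fin n)).filter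
      (fun b => B < #((cyclicPts f).filter (IsCyclicPt (fun y => f^[A] (b y)))) ∨
         B < (cyclicPts f).sup (heightOf (fun y => f^[A] (b y))))) = ∅ :=
      bad_empty f hheight hle
    rw [show ((Finset.univ : Finset (Fin n → Fin n)).filter
          (fun b =>
            ((cyclicPts f).filter
                (IsCyclicPt (fun y => f^[A] (b y)))).card > B ∨
            (cyclicPts f).sup (heightOf (fun y => f^[A] (b y))) > B)) = ∅ from hempty]
    simp only [Finset.card_empty, Nat.cast_zero, zero_div]
    positivity
  · -- main case
    have hmb := main_card_bound f hheight hlt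
    rw [hcardfun, div_le_iff₀ (by positivity)]
    have hm0 : 0 < #(cyclicPts f) := lt_of_le_of_lt (Nat.zero_le B) hlt
    have hm' : (0:ℝ) < (#(cyclicPts f) : ℝ) := by exact_mod_cast hm0
    -- numeric bound
    set βR : ℝ := (B : ℝ) with hβR
    set mR : ℝ := (#(cyclicPts f) : ℝ) with hmR
    have hαR : (alphaN ε n : ℝ) ≤ x ^ ((1:ℝ)/2 + ε) :=
      Nat.floor_le (by positivity)
    have hmα : mR ≤ x ^ ((1:ℝ)/2 + ε) := by
      have : (#(cyclicPts f) : ℝ) ≤ (alphaN ε n : ℝ) := by exact_mod_cast hcard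
      linarith
    set u : ℝ := x ^ ((1:ℝ)/4 + 2*ε) with hu
    have hβlb : u - 1 < βR := by
      have := Nat.lt_floor_add_one (x ^ ((1:ℝ)/4 + 2*ε))
      rw [hβR, hB]
      unfold betaN
      rw [← hxdef]
      linarith
    have hβ2 : u/2 ≤ βR := by linarith
    have hβ3 : u/2 ≤ βR - 1 := by linarith
    have hu0 : 0 < u := Real.rpow_pos_of_pos hx0 _
    have hnum : u*u/8 ≤ βR * (βR - 1) / 2 := by nlinarith
    have huu : u * u = x ^ ((1:ℝ)/2 + 4*ε) := by
      rw [hu, ← Real.rpow_add hx0]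
      congr 1
      ring
    have hDlb : x^(3*ε)/8 ≤ (βR * (βR - 1) / 2) / mR := by
      have h1 : (βR * (βR - 1) / 2) / mR ≥ (u*u/8) / (x ^ ((1:ℝ)/2 + ε)) := by
        have hden : (0:ℝ) < x ^ ((1:ℝ)/2 + ε) := Real.rpow_pos_of_pos hx0 _
        have h2 : (u*u/8) / (x ^ ((1:ℝ)/2 + ε)) ≤ (u*u/8) / mR := by
          apply div_le_div_of_nonneg_left (by positivity) hm' hmα
        have h3 : (u*u/8) / mR ≤ (βR * (βR - 1) / 2) / mR :=
          (div_le_div_iff_of_pos_right hm').2 hnum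
        linarith
      have h4 : (u*u/8) / (x ^ ((1:ℝ)/2 + ε)) = x^(3*ε)/8 := by
        rw [huu, div_div, mul_comm (8:ℝ), ← div_div, ← Real.rpow_sub hx0]
        congr 2
        ring
      linarith
    -- conclude
    have hExp : (2*x+1) * Real.exp (-(βR*(βR-1)/2) / mR) ≤ Real.exp (-x^(ε/4)) := by
      have h2x : (0:ℝ) < 2*x+1 := by linarith
      have : (2*x+1) * Real.exp (-(βR*(βR-1)/2) / mR)
          = Real.exp (Real.log (2*x+1) + (-(βR*(βR-1)/2) / mR)) := by
        rw [Real.exp_add, Real.exp_log h2x]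
      rw [this, Real.exp_le_exp]
      have : -(βR*(βR-1)/2) / mR = -((βR*(βR-1)/2) / mR) := by ring
      rw [this]
      have := hmain
      have h5 : x^(ε/4) + Real.log (2*x+1) ≤ (βR*(βR-1)/2)/mR := by linarith
      linarith
    calc (((Finset.univ : Finset (Fin n → Fin n)).filter
          (fun b =>
            ((cyclicPts f).filter
                (IsCyclicPt (fun y => f^[A] (b y)))).card > B ∨
            (cyclicPts f).sup (heightOf (fun y => f^[A] (b y))) > B)).card : ℝ)
        ≤ (2*x+1) * (Real.exp (-(βR*(βR-1)/2) / mR) * x^n) := hmb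
      _ = ((2*x+1) * Real.exp (-(βR*(βR-1)/2) / mR)) * x^n := by ring
      _ ≤ Real.exp (-x^(ε/4)) * x^n := by
          apply mul_le_mul_of_nonneg_right hExp (by positivity)
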